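/- Let n ≥ 1, let ψ₁, ψ₂, φ ∈ ℂⁿ be unit vectors with ⟨φ, ψ₁⟩ = 0 and ⟨φ, ψ₂⟩ = 0, and let q be a real number with 0 ≤ q ≤ 1. Define the density matrices ρ₁ := q•(ψ₁ψ₁ᴴ) + (1−q)•(φφᴴ) and ρ₂ := q•(ψ₂ψ₂ᴴ) + (1−q)•(φφᴴ), where ψψᴴ denotes the n×n matrix with entries ψ(i)·conj(ψ(j)). Then F(ρ₁, ρ₂) = q·|⟨ψ₁, ψ₂⟩| + (1−q). -/

import Mathlib

open Matrix
open scoped ComplexOrder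

open Classical in
/-- Positive semidefinite square root of a matrix (zero if not PSD). -/
noncomputable def msqrt {n : Type*} [Fintype n] [DecidableEq n] (A : Matrix n n ℂ) :
    Matrix n n ℂ :=
  if h : A.PosSemidef then
    (h.1.eigenvectorUnitary : Matrix n n ℂ) * diagonal ((↑) ∘ (√·) ∘ h.1.eigenvalues) *
      (star h.1.eigenvectorUnitary : Matrix n n ℂ)
  else 0

/-- Fidelity `F(ρ,σ) = Tr √(√ρ σ √ρ)` of two (positive semidefinite) matrices. -/
noncomputable def mFidelity {n : Type*} [Fintype n] [DecidableEq n]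
    (ρ σ : Matrix n n ℂ) : ℝ :=
  ((msqrt (msqrt ρ * σ * msqrt ρ)).trace).re

/-- The inner product `⟨u, v⟩ = ∑ i, conj (u i) * v i`. -/
noncomputable def cinner {n : ℕ} (u v : Fin n → ℂ) : ℂ :=
  ∑ i, (starRingEnd ℂ) (u i) * v i

section Aux
variable {n : ℕ}

lemma vmv_mul_vmv (a b c d : Fin n → ℂ) :
    vecMulVec a b * vecMulVec c d = (b ⬝ᵥ c) • vecMulVec a d := by
  ext i j
  simp only [Matrix.mul_apply, vecMulVec_apply, Matrix.smul_apply, dotProduct, smul_eq_mul,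
    Finset.sum_mul]
  exact Finset.sum_congr rfl fun k _ => by ring

lemma dot_star_eq_cinner (u v : Fin n → ℂ) : star u ⬝ᵥ v = cinner u v := rfl

lemma dot_swap (u v : Fin n → ℂ) : star v ⬝ᵥ u = star (star u ⬝ᵥ v) := by
  simp [dotProduct, star_sum, mul_comm]

lemma psd_vmv (u : Fin n → ℂ) : (vecMulVec u (star u)).PosSemidef := by
  have h : vecMulVec u (star u) = replicateCol Unit u * (replicateCol Unit u)ᴴ := by
    rw [conjTranspose_replicateCol, ← vecMulVec_eq]
  rw [h]
  exact posSemidef_self_mul_conjTranspose _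

lemma trace_vmv_star (u : Fin n → ℂ) : (vecMulVec u (star u)).trace = cinner u u := by
  simp [Matrix.trace, Matrix.diag, vecMulVec_apply, cinner, mul_comm]

lemma psd_csmul {A : Matrix (Fin n) (Fin n) ℂ} (hA : A.PosSemidef) {r : ℝ} (hr : 0 ≤ r) :
    (((r : ℂ)) • A).PosSemidef := by
  constructor
  · have := hA.1
    simp [Matrix.IsHermitian, conjTranspose_smul, this.eq, Complex.conj_ofReal]
  · intro x
    exact (hA.smul (by exact_mod_cast hr : (0:ℂ) ≤ (r:ℂ))).2 x

lemma real_smul_mat (r : ℝ) (A : Matrix (Fin n) (Fin n) ℂ) : r • A = (r : ℂ) • A := by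
  ext i j
  simp [Complex.real_smul]

lemma msqrt_eq_of_mul_self {A B : Matrix (Fin n) (Fin n) ℂ} (hB : B.PosSemidef)
    (hA : A.PosSemidef) (h : B * B = A) : msqrt A = B := by
  open scoped MatrixOrder in
  have h1 : CFC.sqrt A = B := CFC.sqrt_unique h hB.nonneg
  open scoped MatrixOrder in
  rw [CFC.sqrt_eq_real_sqrt A hA.nonneg, cfcₙ_eq_cfc, hA.1.cfc_eq, IsHermitian.cfc,
    Unitary.conjStarAlgAut_apply] at h1
  rw [msqrt, dif_pos hA, ← h1]
  congr

end Aux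

theorem fidelity_rank_two_mixtures (n : ℕ) (hn : 1 ≤ n) (ψ₁ ψ₂ φ : Fin n → ℂ)
    (hψ₁ : cinner ψ₁ ψ₁ = 1) (hψ₂ : cinner ψ₂ ψ₂ = 1) (hφ : cinner φ φ = 1)
    (horth₁ : cinner φ ψ₁ = 0) (horth₂ : cinner φ ψ₂ = 0)
    (q : ℝ) (hq0 : 0 ≤ q) (hq1 : q ≤ 1)
    (ρ₁ ρ₂ : Matrix (Fin n) (Fin n) ℂ)
    (hρ₁ : ρ₁ = q • Matrix.vecMulVec ψ₁ (star ψ₁) + (1 - q) • Matrix.vecMulVec φ (star φ))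
    (hρ₂ : ρ₂ = q • Matrix.vecMulVec ψ₂ (star ψ₂) + (1 - q) • Matrix.vecMulVec φ (star φ)) :
    mFidelity ρ₁ ρ₂ = q * ‖cinner ψ₁ ψ₂‖ + (1 - q) := by
  set P₁ := vecMulVec ψ₁ (star ψ₁) with hP₁
  set P₂ := vecMulVec ψ₂ (star ψ₂) with hP₂
  set Pφ := vecMulVec φ (star φ) with hPφ
  set T := vecMulVec ψ₁ (star ψ₂) with hT
  set c := cinner ψ₁ ψ₂ with hc
  set r := ‖c‖ with hr
  have hq1' : (0:ℝ) ≤ 1 - q := by linarith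
  set a := Real.sqrt q with ha
  set b := Real.sqrt (1 - q) with hb
  have ha0 : 0 ≤ a := Real.sqrt_nonneg _
  have hb0 : 0 ≤ b := Real.sqrt_nonneg _
  have haa : (a:ℂ) * (a:ℂ) = (q:ℂ) := by
    rw [← Complex.ofReal_mul, Real.mul_self_sqrt hq0]
  have hbb : (b:ℂ) * (b:ℂ) = ((1 - q : ℝ):ℂ) := by
    rw [← Complex.ofReal_mul, Real.mul_self_sqrt hq1']
  -- dot product facts
  have d11 : star ψ₁ ⬝ᵥ ψ₁ = 1 := hψ₁
  have dφφ : star φ ⬝ᵥ φ = 1 := hφ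
  have dφ1 : star φ ⬝ᵥ ψ₁ = 0 := horth₁
  have dφ2 : star φ ⬝ᵥ ψ₂ = 0 := horth₂
  have d1φ : star ψ₁ ⬝ᵥ φ = 0 := by rw [dot_swap, dφ1, star_zero]
  have d2φ : star ψ₂ ⬝ᵥ φ = 0 := by rw [dot_swap, dφ2, star_zero]
  have d12 : star ψ₁ ⬝ᵥ ψ₂ = c := rfl
  have d21 : star ψ₂ ⬝ᵥ ψ₁ = star c := by rw [dot_swap]; rfl
  -- matrix product facts
  have p11 : P₁ * P₁ = P₁ := by rw [hP₁, vmv_mul_vmv, d11, one_smul]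
  have pφφ : Pφ * Pφ = Pφ := by rw [hPφ, vmv_mul_vmv, dφφ, one_smul]
  have p1φ : P₁ * Pφ = 0 := by rw [hP₁, hPφ, vmv_mul_vmv, d1φ, zero_smul]
  have pφ1 : Pφ * P₁ = 0 := by rw [hPφ, hP₁, vmv_mul_vmv, dφ1, zero_smul]
  have pφ2 : Pφ * P₂ = 0 := by rw [hPφ, hP₂, vmv_mul_vmv, dφ2, zero_smul]
  have p12 : P₁ * P₂ = c • T := by rw [hP₁, hP₂, vmv_mul_vmv, d12]
  have t1 : T * P₁ = star c • P₁ := by rw [hT, hP₁, vmv_mul_vmv, d21]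
  have tφ : T * Pφ = 0 := by rw [hT, hPφ, vmv_mul_vmv, d2φ, zero_smul]
  -- sqrt of ρ₁
  set B := (a:ℂ) • P₁ + (b:ℂ) • Pφ with hB
  have hBpsd : B.PosSemidef :=
    (psd_csmul (psd_vmv ψ₁) ha0).add (psd_csmul (psd_vmv φ) hb0)
  have hBsq : B * B = ρ₁ := by
    rw [hρ₁, real_smul_mat, real_smul_mat, hB]
    simp only [add_mul, mul_add, smul_mul_assoc, mul_smul_comm, p11, pφφ, p1φ, pφ1,
      smul_smul, smul_zero, add_zero, zero_add, haa, hbb]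
  have hρ₁psd : ρ₁.PosSemidef := by
    have h2 := hBpsd.pow 2
    rwa [pow_two, hBsq] at h2
  have hsqrt1 : msqrt ρ₁ = B := by
    exact msqrt_eq_of_mul_self hBpsd hρ₁psd hBsq
  -- the middle matrix
  set S := ((q*r : ℝ):ℂ) • P₁ + ((1-q : ℝ):ℂ) • Pφ with hS
  have hSpsd : S.PosSemidef :=
    (psd_csmul (psd_vmv ψ₁) (mul_nonneg hq0 (norm_nonneg c))).add
      (psd_csmul (psd_vmv φ) hq1')
  have hcst : c * star c = ((r:ℝ):ℂ) * ((r:ℝ):ℂ) := by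
    rw [show star c = (starRingEnd ℂ) c from rfl, Complex.mul_conj, Complex.normSq_eq_norm_sq, ← hr]
    push_cast
    ring
  have hM : B * ρ₂ * B = S * S := by
    rw [hρ₂, real_smul_mat, real_smul_mat, hB, hS]
    simp only [add_mul, mul_add, smul_mul_assoc, mul_smul_comm, p11, pφφ, p1φ, pφ1, pφ2,
      p12, t1, tφ, smul_smul, smul_zero, add_zero, zero_add, zero_mul, mul_zero]
    have e1 : ((a:ℂ) * ((q:ℂ) * ((a:ℂ) * c) * star c)) = ((q * r : ℝ):ℂ) * ((q * r : ℝ):ℂ) := by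
      calc (a:ℂ) * ((q:ℂ) * ((a:ℂ) * c) * star c) = ((a:ℂ)*(a:ℂ)) * (q:ℂ) * (c * star c) := by
            ring
        _ = (q:ℂ) * (q:ℂ) * (((r:ℝ):ℂ) * ((r:ℝ):ℂ)) := by rw [haa, hcst]
        _ = ((q * r : ℝ):ℂ) * ((q * r : ℝ):ℂ) := by push_cast; ring
    have e2 : ((b:ℂ) * (((1 - q : ℝ):ℂ) * (b:ℂ))) = ((1 - q : ℝ):ℂ) * ((1 - q : ℝ):ℂ) := by
      rw [show (b:ℂ) * (((1 - q : ℝ):ℂ) * (b:ℂ)) = ((b:ℂ)*(b:ℂ)) * ((1 - q : ℝ):ℂ) from by ring,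
        hbb]
    rw [e1, e2]
  have hMpsd : (B * ρ₂ * B).PosSemidef := by
    have h2 := hSpsd.pow 2
    rwa [pow_two, ← hM] at h2
  have hsqrtM : msqrt (B * ρ₂ * B) = S := by
    exact msqrt_eq_of_mul_self hSpsd hMpsd hM.symm
  have tr1 : P₁.trace = 1 := by rw [hP₁, trace_vmv_star, hψ₁]
  have trφ : Pφ.trace = 1 := by rw [hPφ, trace_vmv_star, hφ]
  simp only [mFidelity, hsqrt1, hsqrtM, hS, trace_add, trace_smul, tr1, trφ, smul_eq_mul,
    mul_one, Complex.add_re, Complex.ofReal_re]
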